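/- Fix a positive integer k. For all complex q with |q| < 1, the (2k+3)-agonal number theorem holds: (q;q)_∞ = 1 + ∑_{m=1}^{∞} (-1)^m [ (q^{m+1};q)_{(k-1)m} q^{m((2k+1)m+1)/2} + ∑_{j=0}^{k-1} (q^m;q)_{(k-1)m-j} q^{m((2k+1)m-2j-1)/2} ]. -/

import Mathlib

open Finset Filter Topology

namespace PNTaux

/-- triangular numbers -/
def tri : ℕ → ℕ
  | 0 => 0
  | M + 1 => tri M + (M + 1)

lemma two_tri (M : ℕ) : 2 * tri M = M * (M + 1) := by
  induction M with
  | zero => rfl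
  | succ M ih => show 2 * (tri M + (M+1)) = _; rw [Nat.mul_add, ih]; ring

/-- the remainder series terms -/
noncomputable def f (K : ℕ) (q : ℂ) (M n : ℕ) : ℂ :=
  q ^ ((M + 1) * (n + 1) + (2 * K + 3) * tri M) *
    ∏ i ∈ Finset.range (n + K * M), (1 - q ^ (M + 1) * q ^ i)

/-- the intermediate series terms after the Euler peel -/
noncomputable def g (K : ℕ) (q : ℂ) (M n : ℕ) : ℂ :=
  q ^ ((M + 1) * (n + 1) + (2 * K + 3) * tri M + (K + 1) * (M + 1)) *
    ∏ i ∈ Finset.range (n + K * (M + 1)), (1 - q ^ (M + 2) * q ^ i)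

noncomputable def E (q : ℂ) : ℝ := Real.exp ((1 - ‖q‖)⁻¹)

section q

variable {q : ℂ} (hq : ‖q‖ < 1)

include hq

lemma prod_bound (s L : ℕ) : ‖∏ i ∈ Finset.range L, (1 - q ^ (s + 1) * q ^ i)‖ ≤ E q := by
  have h0 : (0:ℝ) ≤ ‖q‖ := norm_nonneg q
  calc ‖∏ i ∈ Finset.range L, (1 - q ^ (s+1) * q ^ i)‖
      = ∏ i ∈ Finset.range L, ‖1 - q ^ (s+1) * q ^ i‖ := norm_prod _ _
    _ ≤ ∏ i ∈ Finset.range L, Real.exp (‖q‖ ^ i) := by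
        apply Finset.prod_le_prod (fun i _ => norm_nonneg _)
        intro i _
        have h1 : ‖1 - q ^ (s+1) * q ^ i‖ ≤ 1 + ‖q‖ ^ (s+1+i) := by
          calc ‖1 - q ^ (s+1) * q ^ i‖ ≤ ‖(1:ℂ)‖ + ‖q ^ (s+1) * q ^ i‖ := norm_sub_le _ _
            _ = 1 + ‖q‖ ^ (s+1+i) := by rw [norm_one, norm_mul, norm_pow, norm_pow, ← pow_add]
        have h2 : ‖q‖ ^ (s+1+i) ≤ ‖q‖ ^ i :=
          pow_le_pow_of_le_one h0 hq.le (by omega)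
        calc ‖1 - q ^ (s+1) * q ^ i‖ ≤ 1 + ‖q‖ ^ i := by linarith
          _ = ‖q‖ ^ i + 1 := by ring
          _ ≤ Real.exp (‖q‖ ^ i) := Real.add_one_le_exp _
    _ = Real.exp (∑ i ∈ Finset.range L, ‖q‖ ^ i) := (Real.exp_sum _ _).symm
    _ ≤ E q := by
        apply Real.exp_le_exp.2
        calc ∑ i ∈ Finset.range L, ‖q‖ ^ i ≤ ∑' i : ℕ, ‖q‖ ^ i :=
              Summable.sum_le_tsum _ (fun i _ => pow_nonneg h0 i)
                (summable_geometric_of_lt_one h0 hq)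
          _ = (1 - ‖q‖)⁻¹ := tsum_geometric_of_lt_one h0 hq

lemma term_bound (e L s : ℕ) :
    ‖q ^ e * ∏ i ∈ Finset.range L, (1 - q ^ (s + 1) * q ^ i)‖ ≤ E q * ‖q‖ ^ e := by
  rw [norm_mul, norm_pow]
  calc ‖q‖ ^ e * ‖∏ i ∈ Finset.range L, (1 - q ^ (s + 1) * q ^ i)‖
      ≤ ‖q‖ ^ e * E q :=
        mul_le_mul_of_nonneg_left (prod_bound hq s L) (pow_nonneg (norm_nonneg q) e)
    _ = E q * ‖q‖ ^ e := mul_comm _ _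

lemma summable_of_bound (h : ℕ → ℂ) (C : ℝ) (hC : 0 ≤ C) (b : ℕ → ℕ) (hb : ∀ n, n ≤ b n)
    (hh : ∀ n, ‖h n‖ ≤ C * ‖q‖ ^ b n) : Summable h := by
  apply Summable.of_norm_bounded (g := fun n => C * ‖q‖ ^ n)
    ((summable_geometric_of_lt_one (norm_nonneg q) hq).mul_left C)
  intro n
  refine (hh n).trans (mul_le_mul_of_nonneg_left ?_ hC)
  exact pow_le_pow_of_le_one (norm_nonneg q) hq.le (hb n)

lemma f_norm_le (K M n : ℕ) :
    ‖f K q M n‖ ≤ E q * ‖q‖ ^ ((M + 1) * (n + 1) + (2 * K + 3) * tri M) :=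
  term_bound hq _ _ M

lemma g_norm_le (K M n : ℕ) :
    ‖g K q M n‖ ≤ E q * ‖q‖ ^ ((M + 1) * (n + 1) + (2 * K + 3) * tri M + (K + 1) * (M + 1)) :=
  term_bound hq _ _ (M + 1)

omit hq in
lemma exp_ge (M n c : ℕ) : n ≤ (M + 1) * (n + 1) + c := by
  have : n + 1 ≤ (M + 1) * (n + 1) := Nat.le_mul_of_pos_left (n+1) (Nat.succ_pos M)
  omega

lemma summable_f (K M : ℕ) : Summable (f K q M) :=
  summable_of_bound hq _ (E q) (Real.exp_nonneg _) _ (fun n => PNTaux.exp_ge M n _)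
    (fun n => f_norm_le hq K M n)

lemma summable_g (K M : ℕ) : Summable (g K q M) :=
  summable_of_bound hq _ (E q) (Real.exp_nonneg _)
    (fun n => (M + 1) * (n + 1) + (2 * K + 3) * tri M + (K + 1) * (M + 1))
    (fun n => by show n ≤ (M + 1) * (n + 1) + (2 * K + 3) * tri M + (K + 1) * (M + 1); rw [Nat.add_assoc]; exact PNTaux.exp_ge M n _)
    (fun n => g_norm_le hq K M n)

lemma tsum_f_norm_le (K M : ℕ) :
    ‖∑' n, f K q M n‖ ≤ E q * (1 - ‖q‖)⁻¹ * ‖q‖ ^ (M + 1) := by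
  have h0 : (0:ℝ) ≤ ‖q‖ := norm_nonneg q
  have hterm : ∀ n, ‖f K q M n‖ ≤ (E q * ‖q‖ ^ (M + 1)) * ‖q‖ ^ n := by
    intro n
    refine (f_norm_le hq K M n).trans ?_
    rw [mul_assoc, ← pow_add]
    refine mul_le_mul_of_nonneg_left ?_ (Real.exp_nonneg _)
    apply pow_le_pow_of_le_one h0 hq.le
    have : M + 1 + n ≤ (M + 1) * (n + 1) := by nlinarith
    omega
  have hsum : Summable (fun n => (E q * ‖q‖ ^ (M + 1)) * ‖q‖ ^ n) :=
    (summable_geometric_of_lt_one h0 hq).mul_left _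
  have hnorm : Summable (fun n => ‖f K q M n‖) :=
    Summable.of_nonneg_of_le (fun n => norm_nonneg _) hterm hsum
  calc ‖∑' n, f K q M n‖ ≤ ∑' n, ‖f K q M n‖ := norm_tsum_le_tsum_norm hnorm
    _ ≤ ∑' n, (E q * ‖q‖ ^ (M + 1)) * ‖q‖ ^ n := Summable.tsum_le_tsum hterm hnorm hsum
    _ = (E q * ‖q‖ ^ (M + 1)) * (1 - ‖q‖)⁻¹ := by
        rw [tsum_mul_left, tsum_geometric_of_lt_one h0 hq]
    _ = E q * (1 - ‖q‖)⁻¹ * ‖q‖ ^ (M + 1) := by ring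

omit hq

lemma f_shift (K M n : ℕ) :
    f K q M (n + (K + 1)) = g K q M n - q ^ (M + 1) * g K q M n := by
  unfold f g
  have hlen : n + (K + 1) + K * M = (n + K * (M + 1)) + 1 := by ring
  rw [hlen, Finset.prod_range_succ']
  have hfac : ∀ i, (1 - q ^ (M+1) * q ^ (i+1)) = (1 - q ^ (M+2) * q ^ i) := fun i => by ring
  simp only [hfac, pow_zero, mul_one]
  ring

lemma g_succ_sub (K M n : ℕ) :
    g K q M (n + 1) - q ^ (M + 1) * g K q M n = -(f K q (M + 1) n) := by
  unfold f g
  show _ = -(q ^ ((M + 1 + 1) * (n + 1) + (2 * K + 3) * (tri M + (M+1))) * _)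
  have hlen : n + 1 + K * (M + 1) = (n + K * (M + 1)) + 1 := by ring
  rw [hlen, Finset.prod_range_succ]
  ring

include hq in
lemma euler (K M : ℕ) :
    (∑' n, f K q M (n + (K + 1))) = g K q M 0 - ∑' n, f K q (M + 1) n := by
  have hg := summable_g hq K M
  have hg1 : Summable (fun n => g K q M (n + 1)) :=
    hg.comp_injective (add_left_injective 1)
  have hgm : Summable (fun n => q ^ (M + 1) * g K q M n) := hg.mul_left _
  calc (∑' n, f K q M (n + (K + 1)))
      = ∑' n, (g K q M n - q ^ (M + 1) * g K q M n) := tsum_congr (fun n => f_shift K M n)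
    _ = (∑' n, g K q M n) - ∑' n, q ^ (M + 1) * g K q M n := Summable.tsum_sub hg hgm
    _ = (g K q M 0 + ∑' n, g K q M (n + 1)) - q ^ (M + 1) * ∑' n, g K q M n := by
        rw [tsum_mul_left, Summable.tsum_eq_zero_add hg]
    _ = g K q M 0 + ((∑' n, g K q M (n + 1)) - ∑' n, q ^ (M + 1) * g K q M n) := by
        rw [tsum_mul_left]; ring
    _ = g K q M 0 + ∑' n, (g K q M (n + 1) - q ^ (M + 1) * g K q M n) := by
        rw [Summable.tsum_sub hg1 hgm]
    _ = g K q M 0 + ∑' n, -(f K q (M + 1) n) := by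
        refine congrArg _ (tsum_congr (fun n => g_succ_sub K M n))
    _ = g K q M 0 - ∑' n, f K q (M + 1) n := by rw [tsum_neg]; ring

include hq in
lemma F_rec (K M : ℕ) :
    (∑' n, f K q M n) =
      ((∑ t ∈ Finset.range (K + 1), f K q M t) + g K q M 0) - ∑' n, f K q (M + 1) n := by
  rw [← Summable.sum_add_tsum_nat_add (K + 1) (summable_f hq K M), euler hq K M]
  ring

lemma partial_prod (K N : ℕ) :
    ∑ n ∈ Finset.range N, f K q 0 n = 1 - ∏ i ∈ Finset.range N, (1 - q ^ (i + 1)) := by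
  induction N with
  | zero => simp
  | succ N ih =>
      rw [Finset.sum_range_succ, Finset.prod_range_succ, ih]
      have : f K q 0 N = q ^ (N + 1) * ∏ i ∈ Finset.range N, (1 - q ^ (i + 1)) := by
        unfold f
        show q ^ (1 * (N + 1) + (2 * K + 3) * 0) * ∏ i ∈ Finset.range (N + K * 0), _ = _
        have hfac : ∀ i ∈ Finset.range (N + K * 0), (1 - q ^ (0+1) * q ^ i) = (1 - q ^ (i + 1)) :=
          fun i _ => by ring
        rw [Finset.prod_congr rfl hfac]
        simp
      rw [this]
      ring

include hq in
lemma one_sub_pow_ne (n : ℕ) : (1 : ℂ) - q ^ (n + 1) ≠ 0 := by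
  intro h
  have h1 : q ^ (n + 1) = 1 := by
    have := sub_eq_zero.mp h; exact this.symm
  have : ‖q ^ (n + 1)‖ < 1 := by
    rw [norm_pow]
    calc ‖q‖ ^ (n + 1) ≤ ‖q‖ ^ 1 := pow_le_pow_of_le_one (norm_nonneg q) hq.le (by omega)
      _ = ‖q‖ := pow_one _
      _ < 1 := hq
  rw [h1, norm_one] at this
  exact lt_irrefl _ this

include hq in
lemma multipliable_prod : Multipliable (fun i : ℕ => 1 - q ^ (i + 1)) := by
  obtain ⟨N₀, hN₀⟩ : ∃ n : ℕ, ‖q‖ ^ n < 1 / 2 :=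
    exists_pow_lt_of_lt_one (by norm_num) hq
  apply Multipliable.comp_nat_add (k := N₀)
  have key : ∀ x : Unit, Summable fun n : ℕ => Complex.log (1 - q ^ (n + N₀ + 1)) := by
    intro _
    apply Summable.of_norm_bounded (g := fun n => (3/2) * (‖q‖ ^ N₀ * ‖q‖ ^ n))
      (((summable_geometric_of_lt_one (norm_nonneg q) hq).mul_left _).mul_left _)
    intro n
    have hle : ‖-q ^ (n + N₀ + 1)‖ ≤ 1 / 2 := by
      rw [norm_neg, norm_pow]
      calc ‖q‖ ^ (n + N₀ + 1) ≤ ‖q‖ ^ N₀ :=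
            pow_le_pow_of_le_one (norm_nonneg q) hq.le (by omega)
        _ ≤ 1 / 2 := hN₀.le
    have := Complex.norm_log_one_add_half_le_self hle
    rw [show (1 : ℂ) + -q ^ (n + N₀ + 1) = 1 - q ^ (n + N₀ + 1) by ring] at this
    refine this.trans ?_
    rw [norm_neg, norm_pow, ← pow_add]
    have : ‖q‖ ^ (n + N₀ + 1) ≤ ‖q‖ ^ (N₀ + n) :=
      pow_le_pow_of_le_one (norm_nonneg q) hq.le (by omega)
    nlinarith [norm_nonneg q]
  exact Complex.multipliable_of_summable_log (key ())

include hq in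
lemma F0 (K : ℕ) :
    (∑' n, f K q 0 n) = 1 - ∏' i : ℕ, (1 - q ^ (i + 1)) := by
  have h1 : Tendsto (fun N => ∑ n ∈ Finset.range N, f K q 0 n) atTop
      (𝓝 (∑' n, f K q 0 n)) := (summable_f hq K 0).hasSum.tendsto_sum_nat
  have h2 : Tendsto (fun N => (1:ℂ) - ∏ i ∈ Finset.range N, (1 - q ^ (i + 1))) atTop
      (𝓝 (1 - ∏' i : ℕ, (1 - q ^ (i + 1)))) :=
    tendsto_const_nhds.sub (multipliable_prod hq).hasProd.tendsto_prod_nat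
  refine tendsto_nhds_unique ?_ h2
  exact h1.congr (fun N => partial_prod K N)

include hq in
lemma F_tendsto (K : ℕ) :
    Tendsto (fun M => ∑' n, f K q M n) atTop (𝓝 0) := by
  apply squeeze_zero_norm (fun M => tsum_f_norm_le hq K M)
  have : Tendsto (fun M : ℕ => (E q * (1 - ‖q‖)⁻¹ * ‖q‖) * ‖q‖ ^ M) atTop (𝓝 0) := by
    have h := (tendsto_pow_atTop_nhds_zero_of_lt_one (norm_nonneg q) hq).const_mul
      (E q * (1 - ‖q‖)⁻¹ * ‖q‖)
    simpa using h
  refine this.congr (fun M => ?_)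
  rw [pow_succ]; ring

omit hq in
lemma expA (K m : ℕ) :
    (m + 1) * ((2 * (K + 1) + 1) * (m + 1) + 1) / 2
      = (m + 1) * (0 + 1) + (2 * K + 3) * tri m + (K + 1) * (m + 1) := by
  apply Nat.div_eq_of_eq_mul_left (by norm_num)
  have h2 := two_tri m
  calc (m + 1) * ((2 * (K + 1) + 1) * (m + 1) + 1)
      = (m + 1) * (0 + 1) * 2 + (2 * K + 3) * (m * (m + 1)) + (K + 1) * (m + 1) * 2 := by ring
    _ = (m + 1) * (0 + 1) * 2 + (2 * K + 3) * (2 * tri m) + (K + 1) * (m + 1) * 2 := by rw [h2]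
    _ = ((m + 1) * (0 + 1) + (2 * K + 3) * tri m + (K + 1) * (m + 1)) * 2 := by ring

omit hq in
lemma lenB (K m t : ℕ) (ht : t ≤ K) : K * (m + 1) - (K - t) = t + K * m := by
  rw [show K * (m + 1) = K * m + K by ring]
  generalize K * m = R
  omega

omit hq in
lemma expB (K m t : ℕ) (ht : t ≤ K) :
    (m + 1) * ((2 * (K + 1) + 1) * (m + 1) - 2 * (K - t) - 1) / 2
      = (m + 1) * (t + 1) + (2 * K + 3) * tri m := by
  have hnum : (2 * (K + 1) + 1) * (m + 1) - 2 * (K - t) - 1 = (2 * K + 3) * m + 2 * t + 2 := by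
    rw [show (2 * (K + 1) + 1) * (m + 1) = (2 * K + 3) * m + (2 * K + 3) by ring]
    generalize (2 * K + 3) * m = R
    omega
  rw [hnum]
  apply Nat.div_eq_of_eq_mul_left (by norm_num)
  have h2 := two_tri m
  calc (m + 1) * ((2 * K + 3) * m + 2 * t + 2)
      = (m + 1) * (t + 1) * 2 + (2 * K + 3) * (m * (m + 1)) := by ring
    _ = (m + 1) * (t + 1) * 2 + (2 * K + 3) * (2 * tri m) := by rw [h2]
    _ = ((m + 1) * (t + 1) + (2 * K + 3) * tri m) * 2 := by ring

omit hq in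
lemma bracketA (K m : ℕ) :
    (∏ i ∈ Finset.range ((K + 1 - 1) * (m + 1)), (1 - q ^ (m + 2) * q ^ i)) *
        q ^ ((m + 1) * ((2 * (K + 1) + 1) * (m + 1) + 1) / 2) = g K q m 0 := by
  rw [expA K m]
  unfold g
  simp only [Nat.add_sub_cancel, Nat.zero_add]
  apply mul_comm

omit hq in
lemma bracketB (K m : ℕ) :
    (∑ j ∈ Finset.range (K + 1),
        (∏ i ∈ Finset.range ((K + 1 - 1) * (m + 1) - j), (1 - q ^ (m + 1) * q ^ i)) *
          q ^ ((m + 1) * ((2 * (K + 1) + 1) * (m + 1) - 2 * j - 1) / 2))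
      = ∑ t ∈ Finset.range (K + 1), f K q m t := by
  rw [← Finset.sum_range_reflect (fun j =>
    (∏ i ∈ Finset.range ((K + 1 - 1) * (m + 1) - j), (1 - q ^ (m + 1) * q ^ i)) *
      q ^ ((m + 1) * ((2 * (K + 1) + 1) * (m + 1) - 2 * j - 1) / 2)) (K + 1)]
  apply Finset.sum_congr rfl
  intro t htr
  have ht : t ≤ K := by
    have := Finset.mem_range.mp htr; omega
  simp only [Nat.add_sub_cancel]
  rw [expB K m t ht, lenB K m t ht]
  unfold f
  apply mul_comm

include hq in
lemma br_norm_le (K m : ℕ) :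
    ‖(∑ t ∈ Finset.range (K + 1), f K q m t) + g K q m 0‖
      ≤ ((K + 2 : ℕ) * E q) * ‖q‖ ^ m := by
  have h0 : (0:ℝ) ≤ ‖q‖ := norm_nonneg q
  have hf : ∀ t, ‖f K q m t‖ ≤ E q * ‖q‖ ^ m := by
    intro t
    refine (f_norm_le hq K m t).trans (mul_le_mul_of_nonneg_left ?_ (Real.exp_nonneg _))
    apply pow_le_pow_of_le_one h0 hq.le
    have h1 : m + 1 ≤ (m + 1) * (t + 1) := Nat.le_mul_of_pos_right (m + 1) (Nat.succ_pos t)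
    omega
  have hg : ‖g K q m 0‖ ≤ E q * ‖q‖ ^ m := by
    refine (g_norm_le hq K m 0).trans (mul_le_mul_of_nonneg_left ?_ (Real.exp_nonneg _))
    apply pow_le_pow_of_le_one h0 hq.le
    have h1 : m + 1 ≤ (m + 1) * (0 + 1) := by omega
    omega
  calc ‖(∑ t ∈ Finset.range (K + 1), f K q m t) + g K q m 0‖
      ≤ ‖∑ t ∈ Finset.range (K + 1), f K q m t‖ + ‖g K q m 0‖ := norm_add_le _ _
    _ ≤ (∑ t ∈ Finset.range (K + 1), ‖f K q m t‖) + ‖g K q m 0‖ :=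
        add_le_add_left (norm_sum_le _ _) _
    _ ≤ (∑ _t ∈ Finset.range (K + 1), E q * ‖q‖ ^ m) + E q * ‖q‖ ^ m :=
        add_le_add (Finset.sum_le_sum fun t _ => hf t) hg
    _ = ((K + 2 : ℕ) * E q) * ‖q‖ ^ m := by
        rw [Finset.sum_const, Finset.card_range, nsmul_eq_mul]
        push_cast
        ring

include hq in
lemma summable_br (K : ℕ) :
    Summable (fun m => ((-1 : ℂ) ^ (m + 1)) *
      ((∑ t ∈ Finset.range (K + 1), f K q m t) + g K q m 0)) := by
  apply Summable.of_norm_bounded (g := fun m => ((K + 2 : ℕ) * E q) * ‖q‖ ^ m)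
    ((summable_geometric_of_lt_one (norm_nonneg q) hq).mul_left _)
  intro m
  rw [norm_mul]
  have h1 : ‖(-1 : ℂ) ^ (m + 1)‖ = 1 := by
    rw [norm_pow, norm_neg, norm_one, one_pow]
  rw [h1, one_mul]
  exact br_norm_le hq K m

include hq in
lemma partial_sums (K M : ℕ) :
    ∑ m ∈ Finset.range M, ((-1 : ℂ) ^ (m + 1) *
        ((∑ t ∈ Finset.range (K + 1), f K q m t) + g K q m 0))
      = (-1) ^ M * (∑' n, f K q M n) - ∑' n, f K q 0 n := by
  induction M with
  | zero => simp
  | succ M ih =>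
      rw [Finset.sum_range_succ, ih]
      have hrec := F_rec hq K M
      have hbr : (∑ t ∈ Finset.range (K + 1), f K q M t) + g K q M 0
          = (∑' n, f K q M n) + ∑' n, f K q (M + 1) n := by
        rw [hrec]; ring
      rw [hbr, pow_succ]
      ring

end q

end PNTaux

/-- The `(2k+3)`-agonal number theorem (`z = -1`, `ℓ = 1` in the `(k,ℓ)`-rank
identity): for `|q| < 1`,
`(q;q)_∞ = 1 + ∑_{m=1}^∞ (-1)^m [ (q^{m+1};q)_{(k-1)m} q^{m((2k+1)m+1)/2}
  + ∑_{j=0}^{k-1} (q^m;q)_{(k-1)m-j} q^{m((2k+1)m-2j-1)/2} ]`.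
(The outer series index is shifted: `m + 1` plays the role of `m ≥ 1`.) -/
theorem polygonal_number_theorem (k : ℕ) (hk : 0 < k)
    (q : ℂ) (hq : ‖q‖ < 1) :
    (∏' i : ℕ, (1 - q ^ (i + 1))) =
      1 + ∑' m : ℕ, (-1 : ℂ) ^ (m + 1) *
        ((∏ i ∈ Finset.range ((k - 1) * (m + 1)), (1 - q ^ (m + 2) * q ^ i)) *
            q ^ ((m + 1) * ((2 * k + 1) * (m + 1) + 1) / 2) +
          ∑ j ∈ Finset.range k,
            (∏ i ∈ Finset.range ((k - 1) * (m + 1) - j), (1 - q ^ (m + 1) * q ^ i)) *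
              q ^ ((m + 1) * ((2 * k + 1) * (m + 1) - 2 * j - 1) / 2)) := by
  obtain ⟨K, rfl⟩ : ∃ K, k = K + 1 := ⟨k - 1, (Nat.succ_pred_eq_of_pos hk).symm⟩
  have hterm : ∀ m : ℕ, (-1 : ℂ) ^ (m + 1) *
      ((∏ i ∈ Finset.range ((K + 1 - 1) * (m + 1)), (1 - q ^ (m + 2) * q ^ i)) *
          q ^ ((m + 1) * ((2 * (K + 1) + 1) * (m + 1) + 1) / 2) +
        ∑ j ∈ Finset.range (K + 1),
          (∏ i ∈ Finset.range ((K + 1 - 1) * (m + 1) - j), (1 - q ^ (m + 1) * q ^ i)) *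
            q ^ ((m + 1) * ((2 * (K + 1) + 1) * (m + 1) - 2 * j - 1) / 2))
      = (-1 : ℂ) ^ (m + 1) *
          ((∑ t ∈ Finset.range (K + 1), PNTaux.f K q m t) + PNTaux.g K q m 0) := by
    intro m
    rw [PNTaux.bracketA K m, PNTaux.bracketB K m]
    ring
  rw [tsum_congr hterm]
  have hsum := PNTaux.summable_br hq K
  have h1 := hsum.hasSum.tendsto_sum_nat
  have h2 : Filter.Tendsto
      (fun M => (-1:ℂ)^M * (∑' n, PNTaux.f K q M n) - ∑' n, PNTaux.f K q 0 n)
      Filter.atTop (nhds (0 - ∑' n, PNTaux.f K q 0 n)) := by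
    refine Filter.Tendsto.sub ?_ tendsto_const_nhds
    have hFn : Filter.Tendsto (fun M => ‖∑' n, PNTaux.f K q M n‖) Filter.atTop (nhds 0) := by
      have := PNTaux.F_tendsto hq K
      simpa using this.norm
    apply squeeze_zero_norm _ hFn
    intro M
    rw [norm_mul, norm_pow, norm_neg, norm_one, one_pow, one_mul]
  have h1' : Filter.Tendsto (fun M => ∑ m ∈ Finset.range M, ((-1 : ℂ) ^ (m + 1) *
      ((∑ t ∈ Finset.range (K + 1), PNTaux.f K q m t) + PNTaux.g K q m 0)))
      Filter.atTop (nhds (0 - ∑' n, PNTaux.f K q 0 n)) :=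
    h2.congr (fun M => (PNTaux.partial_sums hq K M).symm)
  have hval := tendsto_nhds_unique h1 h1'
  rw [hval, PNTaux.F0 hq K]
  ring
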